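/- Let (X, Z) be a random vector in ℝ² with joint density f(x, z) with respect to Lebesgue measure, and let X̃ = s(X) be a Gaussian transformation of X as in the preceding theorem (s one-to-one, continuously differentiable with everywhere nonzero derivative on an open support of X). Assume ν_f(X̃|Z) is well defined and that Corr_f(X̃, Z) is well defined with Corr_f²(X̃, Z) < 1. Then −(1/2) log ν_f(X̃|Z) ≥ −(1/2) log(1 − Corr_f²(X̃, Z)); that is, the lower bound on I_f(X;Z) based on ν_f(X̃|Z) is at least as large as the Pearson-correlation-based lower bound. -/

import Mathlib

open MeasureTheory ProbabilityTheory Real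

section AuxStmt10
open Filter

lemma my_mul_integrable {Ω : Type*} [MeasurableSpace Ω] {μ : Measure Ω}
    {f g : Ω → ℝ} (hf : MemLp f 2 μ) (hg : MemLp g 2 μ) :
    Integrable (fun ω => f ω * g ω) μ := by
  have h1 : Integrable (fun ω => (f ω + g ω) ^ 2) μ := (hf.add hg).integrable_sq
  have h2 := hf.integrable_sq
  have h3 := hg.integrable_sq
  have heq : (fun ω => f ω * g ω)
      = fun ω => ((f ω + g ω) ^ 2 - f ω ^ 2 - g ω ^ 2) / 2 := by
    funext ω; ring
  rw [heq]
  exact ((h1.sub h2).sub h3).div_const 2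

lemma my_memLp2_condexp {Ω : Type*} {m m0 : MeasurableSpace Ω} (hm : m ≤ m0)
    {μ : Measure Ω} [IsFiniteMeasure μ]
    {U : Ω → ℝ} (hU : MemLp U 2 μ) : MemLp (μ[U|m]) 2 μ := by
  haveI : SigmaFinite (μ.trim hm) := inferInstance
  set G : Lp ℝ 2 μ := ↑(condExpL2 ℝ ℝ hm (hU.toLp U)) with hG
  have hGae : (G : Ω → ℝ) =ᵐ[μ] μ[U|m] := by
    refine ae_eq_condExp_of_forall_setIntegral_eq hm (hU.integrable one_le_two)
      (fun s hs hμs => ?_) (fun s hs hμs => ?_) ?_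
    · exact integrableOn_Lp_of_measure_ne_top G fact_one_le_two_ennreal.elim hμs.ne
    · rw [hG]
      rw [integral_condExpL2_eq hm (hU.toLp U) hs hμs.ne]
      exact setIntegral_congr_ae (hm s hs) ((hU.coeFn_toLp).mono fun ω h _ => h)
    · exact aestronglyMeasurable_condExpL2 hm _
  exact (Lp.memLp G).ae_eq hGae

lemma my_cross_zero {Ω : Type*} {m m0 : MeasurableSpace Ω} (hm : m ≤ m0)
    {μ : Measure Ω} [IsProbabilityMeasure μ]
    {U W : Ω → ℝ} (hU : MemLp U 2 μ)
    (hWm : StronglyMeasurable[m] W) (hW : MemLp W 2 μ) :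
    ∫ ω, W ω * (U ω - (μ[U|m]) ω) ∂μ = 0 := by
  haveI : SigmaFinite (μ.trim hm) := inferInstance
  have hg2 : MemLp (μ[U|m]) 2 μ := my_memLp2_condexp hm hU
  have hUg : MemLp (fun ω => U ω - (μ[U|m]) ω) 2 μ := hU.sub hg2
  have hint : Integrable (fun ω => W ω * (U ω - (μ[U|m]) ω)) μ :=
    my_mul_integrable hW hUg
  have hint2 : Integrable (fun ω => U ω - (μ[U|m]) ω) μ := hUg.integrable one_le_two
  have hpull : μ[(fun ω => W ω * (U ω - (μ[U|m]) ω))|m]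
      =ᵐ[μ] W * μ[(fun ω => U ω - (μ[U|m]) ω)|m] :=
    condExp_mul_of_stronglyMeasurable_left hWm hint hint2
  have hzero : μ[(fun ω => U ω - (μ[U|m]) ω)|m] =ᵐ[μ] 0 := by
    have h1 : μ[(fun ω => U ω - (μ[U|m]) ω)|m] =ᵐ[μ] μ[U|m] - μ[μ[U|m]|m] :=
      condExp_sub (hU.integrable one_le_two) integrable_condExp _
    have h2 : μ[μ[U|m]|m] = μ[U|m] :=
      condExp_of_stronglyMeasurable hm stronglyMeasurable_condExp integrable_condExp
    filter_upwards [h1] with ω hω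
    simp only [Pi.zero_apply]
    rw [hω, h2]
    simp
  have hstep : ∫ ω, W ω * (U ω - (μ[U|m]) ω) ∂μ
      = ∫ ω, (μ[(fun ω => W ω * (U ω - (μ[U|m]) ω))|m]) ω ∂μ := (integral_condExp hm).symm
  rw [hstep]
  have hz : μ[(fun ω => W ω * (U ω - (μ[U|m]) ω))|m] =ᵐ[μ] 0 := by
    filter_upwards [hpull, hzero] with ω h1 h2
    rw [h1]
    simp only [Pi.mul_apply, h2, Pi.zero_apply, mul_zero]
  rw [integral_congr_ae hz]
  simp

lemma my_proj_le {Ω : Type*} {m m0 : MeasurableSpace Ω} (hm : m ≤ m0)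
    {μ : Measure Ω} [IsProbabilityMeasure μ]
    {U V : Ω → ℝ} (hU : MemLp U 2 μ)
    (hVm : StronglyMeasurable[m] V) (hV : MemLp V 2 μ) :
    ∫ ω, (U ω - (μ[U|m]) ω) ^ 2 ∂μ ≤ ∫ ω, (U ω - V ω) ^ 2 ∂μ := by
  have hg2 : MemLp (μ[U|m]) 2 μ := my_memLp2_condexp hm hU
  have hUg : MemLp (fun ω => U ω - (μ[U|m]) ω) 2 μ := hU.sub hg2
  have hW : MemLp (fun ω => (μ[U|m]) ω - V ω) 2 μ := hg2.sub hV
  have hWm : StronglyMeasurable[m] (fun ω => (μ[U|m]) ω - V ω) :=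
    stronglyMeasurable_condExp.sub hVm
  have key : ∫ ω, ((μ[U|m]) ω - V ω) * (U ω - (μ[U|m]) ω) ∂μ = 0 :=
    my_cross_zero hm hU hWm hW
  have hi1 : Integrable (fun ω => (U ω - (μ[U|m]) ω) ^ 2) μ := hUg.integrable_sq
  have hi2 : Integrable (fun ω => ((μ[U|m]) ω - V ω) * (U ω - (μ[U|m]) ω)) μ :=
    my_mul_integrable hW hUg
  have hi3 : Integrable (fun ω => ((μ[U|m]) ω - V ω) ^ 2) μ := hW.integrable_sq
  have h1 : ∫ ω, (U ω - V ω) ^ 2 ∂μ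
      = ∫ ω, ((U ω - (μ[U|m]) ω) ^ 2
          + (2 * (((μ[U|m]) ω - V ω) * (U ω - (μ[U|m]) ω))
            + ((μ[U|m]) ω - V ω) ^ 2)) ∂μ := by
    congr 1; funext ω; ring
  have h2 : ∫ ω, (2 * (((μ[U|m]) ω - V ω) * (U ω - (μ[U|m]) ω))
        + ((μ[U|m]) ω - V ω) ^ 2) ∂μ = ∫ ω, ((μ[U|m]) ω - V ω) ^ 2 ∂μ := by
    rw [integral_add (hi2.const_mul 2) hi3, integral_const_mul, key]; ring
  have h3 : ∫ ω, (U ω - V ω) ^ 2 ∂μ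
      = (∫ ω, (U ω - (μ[U|m]) ω) ^ 2 ∂μ)
        + ∫ ω, (2 * (((μ[U|m]) ω - V ω) * (U ω - (μ[U|m]) ω))
            + ((μ[U|m]) ω - V ω) ^ 2) ∂μ := by
    rw [h1]; exact integral_add hi1 ((hi2.const_mul 2).add hi3)
  rw [h3, h2]
  have hnn : (0:ℝ) ≤ ∫ ω, ((μ[U|m]) ω - V ω) ^ 2 ∂μ :=
    integral_nonneg fun ω => sq_nonneg _
  linarith

lemma my_dd_factor {Ω : Type*} [m0 : MeasurableSpace Ω] (μ : Measure Ω)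
    {Z : Ω → ℝ} (hZ : Measurable Z) {g : Ω → ℝ}
    (hg : StronglyMeasurable[MeasurableSpace.comap Z inferInstance] g) :
    ∃ h : ℝ → ℝ, Measurable h ∧ ∀ᵐ ω ∂μ, g ω = h (Z ω) := by
  have hsimple : ∀ n : ℕ, ∃ t : ℝ → ℝ, Measurable t ∧ ∀ ω, t (Z ω) = hg.approx n ω := by
    intro n
    set sf := hg.approx n with hsf
    have hfiber : ∀ c : ℝ, ∃ B : Set ℝ, MeasurableSet B ∧ Z ⁻¹' B = sf ⁻¹' {c} := by
      intro c
      have h1 : MeasurableSet[MeasurableSpace.comap Z inferInstance] (sf ⁻¹' {c}) :=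
        @SimpleFunc.measurableSet_fiber Ω ℝ (MeasurableSpace.comap Z inferInstance) sf c
      exact h1
    choose B hB hBeq using hfiber
    classical
    refine ⟨fun z => ∑ c ∈ (@SimpleFunc.range Ω ℝ (MeasurableSpace.comap Z inferInstance) sf), Set.indicator (B c) (fun _ => c) z,
      Finset.measurable_sum _ fun c _ => measurable_const.indicator (hB c), fun ω => ?_⟩
    have hmem : ∀ c : ℝ, Z ω ∈ B c ↔ sf ω = c := by
      intro c
      constructor
      · intro hzc
        have h2 : ω ∈ Z ⁻¹' B c := hzc
        rw [hBeq c] at h2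
        exact h2
      · intro hc
        have h2 : ω ∈ sf ⁻¹' {c} := hc
        rw [← hBeq c] at h2
        exact h2
    have hstep : ∀ c ∈ (@SimpleFunc.range Ω ℝ (MeasurableSpace.comap Z inferInstance) sf), Set.indicator (B c) (fun _ => c) (Z ω)
        = if c = sf ω then c else 0 := by
      intro c _
      rw [Set.indicator_apply]
      by_cases h : sf ω = c
      · simp [hmem c, h]
      · simp [hmem c, h, Ne.symm h]
    dsimp only
    rw [Finset.sum_congr rfl hstep, Finset.sum_ite_eq' (@SimpleFunc.range Ω ℝ (MeasurableSpace.comap Z inferInstance) sf) (sf ω) (fun c => c)]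
    simp [SimpleFunc.mem_range_self]
  choose t htmeas htfac using hsimple
  have htendsto : ∀ ω, Tendsto (fun n => t n (Z ω)) atTop (nhds (g ω)) := by
    intro ω
    have h3 : (fun n => t n (Z ω)) = fun n => hg.approx n ω := by funext n; exact htfac n ω
    rw [h3]
    exact hg.tendsto_approx ω
  have hC : MeasurableSet {z : ℝ | ∃ l : ℝ, Tendsto (fun n => t n z) atTop (nhds l)} :=
    measurableSet_exists_tendsto htmeas
  have hae : ∀ᵐ z ∂(Measure.map Z μ), ∃ l : ℝ, Tendsto (fun n => t n z) atTop (nhds l) := by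
    rw [ae_map_iff hZ.aemeasurable hC]
    exact Eventually.of_forall fun ω => ⟨g ω, htendsto ω⟩
  obtain ⟨h, hhmeas, hh⟩ :=
    measurable_limit_of_tendsto_metrizable_ae (fun n => (htmeas n).aemeasurable) hae
  refine ⟨h, hhmeas, ?_⟩
  filter_upwards [ae_of_ae_map hZ.aemeasurable hh] with ω hω
  exact tendsto_nhds_unique (htendsto ω) hω

lemma my_graph_null {s : ℝ → ℝ} {h : ℝ → ℝ} {U₀ : Set ℝ}
    (hs : Measurable s) (hh : Measurable h) (hU₀ : IsOpen U₀) (hinj : Set.InjOn s U₀) :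
    (volume : Measure (ℝ × ℝ)) {p : ℝ × ℝ | p.1 ∈ U₀ ∧ s p.1 = h p.2} = 0 := by
  set A : Set (ℝ × ℝ) := {p : ℝ × ℝ | p.1 ∈ U₀ ∧ s p.1 = h p.2} with hA
  set A' : Set (ℝ × ℝ) := {p : ℝ × ℝ | p.2 ∈ U₀ ∧ s p.2 = h p.1} with hA'
  have hA'meas : MeasurableSet A' := by
    refine MeasurableSet.inter ?_ ?_
    · exact measurable_snd hU₀.measurableSet
    · exact measurableSet_eq_fun (hs.comp measurable_snd) (hh.comp measurable_fst)
  have hswap : Prod.swap ⁻¹' A' = A := rfl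
  have hvolA' : (volume.prod volume) A' = 0 := by
    rw [Measure.prod_apply hA'meas]
    have hz : ∀ z : ℝ, volume (Prod.mk z ⁻¹' A') = 0 := by
      intro z
      have hsub : (Prod.mk z ⁻¹' A').Subsingleton := by
        intro x hx y hy
        exact hinj hx.1 hy.1 (hx.2.trans hy.2.symm)
      exact hsub.measure_zero volume
    simp [hz]
  rw [Measure.volume_eq_prod, ← hswap, ← Measure.map_apply measurable_swap hA'meas,
    Measure.prod_swap]
  exact hvolA'

end AuxStmt10

/-- Conditional mean `E[U | σ(Z)]`. -/
noncomputable def condMean {Ω β : Type*} [MeasurableSpace Ω] [MeasurableSpace β]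
    (μ : Measure Ω) (U : Ω → ℝ) (Z : Ω → β) : Ω → ℝ :=
  μ[U | MeasurableSpace.comap Z inferInstance]

/-- `ν(U|Z) = E{V[U|Z]}/V[U] = E[(U − E[U|Z])²] / V[U]`. -/
noncomputable def nuScalar {Ω β : Type*} [MeasurableSpace Ω] [MeasurableSpace β]
    (μ : Measure Ω) (U : Ω → ℝ) (Z : Ω → β) : ℝ :=
  (∫ ω, (U ω - condMean μ U Z ω) ^ 2 ∂μ) / variance U μ

/-- Pearson correlation `Corr(A,B) = Cov(A,B)/(V[A] V[B])^{1/2}`. -/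
noncomputable def corr {Ω : Type*} [MeasurableSpace Ω] (μ : Measure Ω)
    (A B : Ω → ℝ) : ℝ :=
  (∫ ω, (A ω - ∫ ω', A ω' ∂μ) * (B ω - ∫ ω', B ω' ∂μ) ∂μ) /
    (Real.sqrt (variance A μ) * Real.sqrt (variance B μ))

/-- second inequality of Theorem 4 of the paper. With `X̃ = s(X)` a
Gaussian transformation of `X` as in the preceding theorem, if `ν_f(X̃|Z)` is well
defined and `Corr_f²(X̃,Z) < 1`, then
`−(1/2) log ν_f(X̃|Z) ≥ −(1/2) log(1 − Corr_f²(X̃,Z))`. -/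
theorem stmt_10
    {Ω : Type*} [MeasurableSpace Ω] (μ : Measure Ω) [IsProbabilityMeasure μ]
    (X Z : Ω → ℝ) (f : ℝ × ℝ → ℝ) (s : ℝ → ℝ)
    (hXmeas : Measurable X) (hZmeas : Measurable Z) (hsmeas : Measurable s)
    -- `f` is the joint density of `(X,Z)` with respect to Lebesgue measure
    (hdens : Measure.map (fun ω => (X ω, Z ω)) μ =
      (volume : Measure (ℝ × ℝ)).withDensity (fun p => ENNReal.ofReal (f p)))
    -- `s` is one-to-one and continuously differentiable with everywhere nonzero
    -- derivative on an open set that is a support of `X`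
    (hdom : ∃ U : Set ℝ, IsOpen U ∧ Set.InjOn s U ∧ ContDiffOn ℝ 1 s U ∧
      (∀ x ∈ U, deriv s x ≠ 0) ∧ μ (X ⁻¹' U) = 1)
    -- `X̃ = s(X)` has a (nondegenerate) Gaussian density
    (hGauss : ∃ (a : ℝ) (v : NNReal), v ≠ 0 ∧
      Measure.map (fun ω => s (X ω)) μ = gaussianReal a v)
    -- `ν_f(X̃|Z)` and `Corr_f(X̃,Z)` are well defined, with `Corr_f²(X̃,Z) < 1`
    (hL2 : MemLp (fun ω => s (X ω)) 2 μ) (hZL2 : MemLp Z 2 μ)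
    (hvar : 0 < variance (fun ω => s (X ω)) μ) (hZvar : 0 < variance Z μ)
    (hcorr : corr μ (fun ω => s (X ω)) Z ^ 2 < 1) :
    -(1 / 2) * Real.log (nuScalar μ (fun ω => s (X ω)) Z) ≥
      -(1 / 2) * Real.log (1 - corr μ (fun ω => s (X ω)) Z ^ 2) := by

  obtain ⟨U₀, hU₀open, hinj, -, -, hμU₀⟩ := hdom
  have hm : MeasurableSpace.comap Z inferInstance ≤ ‹MeasurableSpace Ω› := hZmeas.comap_le
  set EU := ∫ ω, s (X ω) ∂μ with hEU
  set EZ := ∫ ω, Z ω ∂μ with hEZ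
  set cv := ∫ ω, (s (X ω) - EU) * (Z ω - EZ) ∂μ with hcv
  set VU := variance (fun ω => s (X ω)) μ with hVU
  set VZ := variance Z μ with hVZ
  -- basic L² facts
  have hP : MemLp (fun ω => s (X ω) - EU) 2 μ := hL2.sub (memLp_const EU)
  have hQ : MemLp (fun ω => Z ω - EZ) 2 μ := hZL2.sub (memLp_const EZ)
  have hiP : Integrable (fun ω => (s (X ω) - EU) ^ 2) μ := hP.integrable_sq
  have hiQ : Integrable (fun ω => (Z ω - EZ) ^ 2) μ := hQ.integrable_sq
  have hiPQ : Integrable (fun ω => (s (X ω) - EU) * (Z ω - EZ)) μ :=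
    my_mul_integrable hP hQ
  -- variance identities
  have hVarU : VU = ∫ ω, (s (X ω) - EU) ^ 2 ∂μ := by
    rw [hVU, variance_eq_integral hL2.aemeasurable]
  have hVarZ : VZ = ∫ ω, (Z ω - EZ) ^ 2 ∂μ := by
    rw [hVZ, variance_eq_integral hZL2.aemeasurable]
  -- correlation identity
  have hcorr_eq : corr μ (fun ω => s (X ω)) Z = cv / (Real.sqrt VU * Real.sqrt VZ) := rfl
  have hρ2 : corr μ (fun ω => s (X ω)) Z ^ 2 = cv ^ 2 / (VU * VZ) := by
    rw [hcorr_eq, div_pow, mul_pow, Real.sq_sqrt hvar.le, Real.sq_sqrt hZvar.le]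
  -- the affine predictor
  have hZm : Measurable[MeasurableSpace.comap Z inferInstance] Z :=
    measurable_iff_comap_le.mpr le_rfl
  have hLm : StronglyMeasurable[MeasurableSpace.comap Z inferInstance]
      (fun ω => EU + cv / VZ * (Z ω - EZ)) :=
    (((hZm.sub measurable_const).const_mul (cv / VZ)).const_add EU).stronglyMeasurable
  have hLL2 : MemLp (fun ω => EU + cv / VZ * (Z ω - EZ)) 2 μ :=
    (memLp_const EU).add (hQ.const_mul (cv / VZ))
  have hproj : ∫ ω, (s (X ω) - (μ[(fun ω => s (X ω))|MeasurableSpace.comap Z inferInstance]) ω) ^ 2 ∂μ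
      ≤ ∫ ω, (s (X ω) - (EU + cv / VZ * (Z ω - EZ))) ^ 2 ∂μ :=
    my_proj_le hm hL2 hLm hLL2
  -- compute the RHS
  have hULsq : ∫ ω, (s (X ω) - (EU + cv / VZ * (Z ω - EZ))) ^ 2 ∂μ = VU - cv ^ 2 / VZ := by
    have h1 : (fun ω => (s (X ω) - (EU + cv / VZ * (Z ω - EZ))) ^ 2)
        = fun ω => ((s (X ω) - EU) ^ 2
            - 2 * (cv / VZ) * ((s (X ω) - EU) * (Z ω - EZ))
            + (cv / VZ) ^ 2 * (Z ω - EZ) ^ 2) := by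
      funext ω; ring
    have e1 : ∫ ω, ((s (X ω) - EU) ^ 2 - 2 * (cv / VZ) * ((s (X ω) - EU) * (Z ω - EZ))
          + (cv / VZ) ^ 2 * (Z ω - EZ) ^ 2) ∂μ
        = (∫ ω, ((s (X ω) - EU) ^ 2 - 2 * (cv / VZ) * ((s (X ω) - EU) * (Z ω - EZ))) ∂μ)
          + ∫ ω, (cv / VZ) ^ 2 * (Z ω - EZ) ^ 2 ∂μ :=
      integral_add (hiP.sub (hiPQ.const_mul _)) (hiQ.const_mul _)
    have e2 : ∫ ω, ((s (X ω) - EU) ^ 2 - 2 * (cv / VZ) * ((s (X ω) - EU) * (Z ω - EZ))) ∂μ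
        = (∫ ω, (s (X ω) - EU) ^ 2 ∂μ)
          - ∫ ω, 2 * (cv / VZ) * ((s (X ω) - EU) * (Z ω - EZ)) ∂μ :=
      integral_sub hiP (hiPQ.const_mul _)
    rw [h1, e1, e2, integral_const_mul, integral_const_mul, ← hcv, ← hVarU, ← hVarZ]
    field_simp
    ring
  have hnum_le : ∫ ω, (s (X ω) - (μ[(fun ω => s (X ω))|MeasurableSpace.comap Z inferInstance]) ω) ^ 2 ∂μ
      ≤ VU - cv ^ 2 / VZ := by
    rw [← hULsq]; exact hproj
  -- positivity of the numerator
  have hg2 : MemLp (μ[(fun ω => s (X ω))|MeasurableSpace.comap Z inferInstance]) 2 μ :=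
    my_memLp2_condexp hm hL2
  have hUg : MemLp (fun ω => s (X ω) - (μ[(fun ω => s (X ω))|MeasurableSpace.comap Z inferInstance]) ω) 2 μ :=
    hL2.sub hg2
  have hnum_nonneg : (0:ℝ) ≤ ∫ ω, (s (X ω) - (μ[(fun ω => s (X ω))|MeasurableSpace.comap Z inferInstance]) ω) ^ 2 ∂μ :=
    integral_nonneg fun ω => sq_nonneg _
  have hnum_pos : 0 < ∫ ω, (s (X ω) - (μ[(fun ω => s (X ω))|MeasurableSpace.comap Z inferInstance]) ω) ^ 2 ∂μ := by
    rcases hnum_nonneg.lt_or_eq with h | h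
    · exact h
    exfalso
    have h0 : ∫ ω, (s (X ω) - (μ[(fun ω => s (X ω))|MeasurableSpace.comap Z inferInstance]) ω) ^ 2 ∂μ = 0 := h.symm
    have hae0 : (fun ω => (s (X ω) - (μ[(fun ω => s (X ω))|MeasurableSpace.comap Z inferInstance]) ω) ^ 2) =ᵐ[μ] 0 :=
      (integral_eq_zero_iff_of_nonneg (fun ω => sq_nonneg _) hUg.integrable_sq).mp h0
    have hUeqg : ∀ᵐ ω ∂μ, s (X ω) = (μ[(fun ω => s (X ω))|MeasurableSpace.comap Z inferInstance]) ω := by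
      filter_upwards [hae0] with ω hω
      have h2 : (s (X ω) - (μ[(fun ω => s (X ω))|MeasurableSpace.comap Z inferInstance]) ω) ^ 2 = 0 := hω
      have h3 : s (X ω) - (μ[(fun ω => s (X ω))|MeasurableSpace.comap Z inferInstance]) ω = 0 :=
        pow_eq_zero_iff two_ne_zero |>.mp h2
      linarith
    have hgm : StronglyMeasurable[MeasurableSpace.comap Z inferInstance]
        (μ[(fun ω => s (X ω))|MeasurableSpace.comap Z inferInstance]) := stronglyMeasurable_condExp
    obtain ⟨h, hhmeas, hgh⟩ := my_dd_factor μ hZmeas hgm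
    have hXae : ∀ᵐ ω ∂μ, X ω ∈ U₀ := by
      have hcomp : μ (X ⁻¹' U₀)ᶜ = 0 := by
        rw [measure_compl (hXmeas hU₀open.measurableSet) (measure_ne_top μ _), hμU₀,
          measure_univ, tsub_self]
      exact ae_iff.mpr hcomp
    set A : Set (ℝ × ℝ) := {p : ℝ × ℝ | p.1 ∈ U₀ ∧ s p.1 = h p.2} with hA
    have hAmeas : MeasurableSet A := by
      refine MeasurableSet.inter ?_ ?_
      · exact measurable_fst hU₀open.measurableSet
      · exact measurableSet_eq_fun (hsmeas.comp measurable_fst) (hhmeas.comp measurable_snd)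
    have hT : Measurable fun ω => (X ω, Z ω) := hXmeas.prodMk hZmeas
    have hmemA : ∀ᵐ ω ∂μ, (X ω, Z ω) ∈ A := by
      filter_upwards [hUeqg, hgh, hXae] with ω h1 h2 h3
      exact ⟨h3, h1.trans h2⟩
    have h1 : μ ((fun ω => (X ω, Z ω)) ⁻¹' A) = 1 := by
      have hc : μ ((fun ω => (X ω, Z ω)) ⁻¹' A)ᶜ = 0 := ae_iff.mp hmemA
      have h5 := measure_add_measure_compl (μ := μ) (hT hAmeas)
      rw [hc, add_zero, measure_univ] at h5
      exact h5
    have h2 : (volume : Measure (ℝ × ℝ)) A = 0 :=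
      my_graph_null hsmeas hhmeas hU₀open hinj
    have h3 : Measure.map (fun ω => (X ω, Z ω)) μ A = 0 := by
      rw [hdens]
      exact (withDensity_absolutelyContinuous volume _) h2
    rw [Measure.map_apply hT hAmeas, h1] at h3
    exact one_ne_zero h3
  -- assemble
  have hNu_eq : nuScalar μ (fun ω => s (X ω)) Z
      = (∫ ω, (s (X ω) - (μ[(fun ω => s (X ω))|MeasurableSpace.comap Z inferInstance]) ω) ^ 2 ∂μ) / VU := rfl
  have hNu_pos : 0 < nuScalar μ (fun ω => s (X ω)) Z := by
    rw [hNu_eq]; exact div_pos hnum_pos hvar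
  have hfrac : (1 - cv ^ 2 / (VU * VZ)) * VU = VU - cv ^ 2 / VZ := by
    field_simp
  have hNu_le : nuScalar μ (fun ω => s (X ω)) Z ≤ 1 - corr μ (fun ω => s (X ω)) Z ^ 2 := by
    rw [hNu_eq, hρ2, div_le_iff₀ hvar]
    rw [hfrac]
    exact hnum_le
  have hlog : Real.log (nuScalar μ (fun ω => s (X ω)) Z)
      ≤ Real.log (1 - corr μ (fun ω => s (X ω)) Z ^ 2) :=
    Real.log_le_log hNu_pos hNu_le
  linarith
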